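/- Let γ ∈ (0,1), set μ = 1/γ, let (p_i)_{i≥0} be a sequence of real numbers with p_{i+1} = γ(p_i − 1/2) for all i, and let k be a nonnegative integer such that γ < γ^{k+1} ( γ + 2(1−γ) p_0 ) ≤ 1. Then for every integer i with 0 ≤ i ≤ k, ∑_{m=0}^{k−i} μ^m < 2 p_i ≤ ∑_{m=0}^{k+1−i} μ^m. -/

import Mathlib

/-- Bracketing of the Moser iteration exponents between consecutive geometric sums:
`∑_{m=0}^{k−i} μ^m < 2p_i ≤ ∑_{m=0}^{k+1−i} μ^m` with `μ = 1/γ`. -/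
theorem stmt_14 (γ : ℝ) (hγ : γ ∈ Set.Ioo (0 : ℝ) 1) (μ : ℝ) (hμ : μ = 1 / γ)
    (p : ℕ → ℝ) (hrec : ∀ i, p (i + 1) = γ * (p i - 1 / 2)) (k : ℕ)
    (hk1 : γ < γ ^ (k + 1) * (γ + 2 * (1 - γ) * p 0))
    (hk2 : γ ^ (k + 1) * (γ + 2 * (1 - γ) * p 0) ≤ 1) :
    ∀ i : ℕ, i ≤ k →
      (∑ m ∈ Finset.range (k - i + 1), μ ^ m) < 2 * p i ∧
      2 * p i ≤ ∑ m ∈ Finset.range (k + 1 - i + 1), μ ^ m := by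
  obtain ⟨hγ0, hγ1⟩ := hγ
  have h1γ : 0 < 1 - γ := by linarith
  have hμγ : μ * γ = 1 := by rw [hμ]; field_simp
  set A : ℝ := γ + 2 * (1 - γ) * p 0 with hA
  have hp : ∀ i, 2 * p i * (1 - γ) = γ ^ i * A - γ := by
    intro i
    induction i with
    | zero => simp only [pow_zero, one_mul, hA]; ring
    | succ n ih =>
      rw [hrec n, pow_succ]
      linear_combination γ * ih
  have hsum : ∀ n : ℕ, (∑ m ∈ Finset.range (n + 1), μ ^ m) * (1 - γ) * γ ^ n
      = 1 - γ ^ (n + 1) := by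
    intro n
    induction n with
    | zero => simp
    | succ n ih =>
      rw [Finset.sum_range_succ]
      have hpow : μ ^ (n + 1) * γ ^ (n + 1) = 1 := by
        rw [← mul_pow, hμγ, one_pow]
      linear_combination γ * ih + (1 - γ) * hpow
  have key1 : 1 < γ ^ k * A := by
    have h' : γ * 1 < γ * (γ ^ k * A) := by
      rw [mul_one]
      calc γ < γ ^ (k + 1) * A := hk1
        _ = γ * (γ ^ k * A) := by ring
    exact lt_of_mul_lt_mul_left h' hγ0.le
  intro i hi
  have hpi := hp i
  have hpk : γ ^ (k - i) * γ ^ i = γ ^ k := by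
    rw [← pow_add]; congr 1; omega
  have hpk2 : γ ^ (k + 1 - i) * γ ^ i = γ ^ (k + 1) := by
    rw [← pow_add]; congr 1; omega
  constructor
  · have hpos : 0 < (1 - γ) * γ ^ (k - i) := mul_pos h1γ (pow_pos hγ0 _)
    rw [← mul_lt_mul_iff_left₀ hpos]
    have e1 : (∑ m ∈ Finset.range (k - i + 1), μ ^ m) * ((1 - γ) * γ ^ (k - i))
        = 1 - γ ^ (k - i + 1) := by rw [← mul_assoc]; exact hsum (k - i)
    have e2 : 2 * p i * ((1 - γ) * γ ^ (k - i)) = γ ^ k * A - γ ^ (k - i + 1) := by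
      rw [pow_succ]
      linear_combination γ ^ (k - i) * hpi + A * hpk
    rw [e1, e2]
    linarith
  · have hpos : 0 < (1 - γ) * γ ^ (k + 1 - i) := mul_pos h1γ (pow_pos hγ0 _)
    rw [← mul_le_mul_iff_left₀ hpos]
    have e1 : (∑ m ∈ Finset.range (k + 1 - i + 1), μ ^ m) * ((1 - γ) * γ ^ (k + 1 - i))
        = 1 - γ ^ (k + 1 - i + 1) := by rw [← mul_assoc]; exact hsum (k + 1 - i)
    have e2 : 2 * p i * ((1 - γ) * γ ^ (k + 1 - i))
        = γ ^ (k + 1) * A - γ ^ (k + 1 - i + 1) := by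
      rw [pow_succ]
      linear_combination γ ^ (k + 1 - i) * hpi + A * hpk2
    rw [e1, e2]
    linarith
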